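/- arXiv:math/0611780 — 4 statements merged into one kernel-verified Lean document; each statement's English description precedes it below -/
import Mathlib

section
/- Let G be a finite group and P a subgroup of G that equals its own normalizer, N_G(P) = P. For x ∈ G write f(x) for the number of G-conjugates of P containing x, i.e. f(x) = |{ gPg⁻¹ : g ∈ G, x ∈ gPg⁻¹ }|. Then the number of orbits of the action of P on G by conjugation equals the sum of f(x) over a set of representatives x of the conjugacy classes of G (the function f is constant on conjugacy classes, so this sum is well defined). -/
open MulAction

section Aux

variable {G : Type*} [Group G] [Fintype G] [DecidableEq G]

/-- membership in a conjugate of `P` -/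
lemma mem_conj_iff (P : Subgroup G) (g y : G) :
    y ∈ Subgroup.map (MulAut.conj g).toMonoidHom P ↔ g⁻¹ * y * g ∈ P := by
  constructor
  · rintro ⟨p, hp, rfl⟩
    simpa [mul_assoc] using hp
  · intro h
    exact ⟨g⁻¹ * y * g, h, by simp [mul_assoc]⟩

/-- (2): counting conjugates of `P` containing `x`, times `|P|`, equals the number of
`g` with `g⁻¹ x g ∈ P`. -/
lemma aux2 (P : Subgroup G) (hP : Subgroup.normalizer (P : Set G) = P) (x : G) :
    Nat.card {Q : Subgroup G //
        (∃ g : G, Q = Subgroup.map (MulAut.conj g).toMonoidHom P) ∧ x ∈ Q} * Nat.card P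
      = Nat.card {g : G // g⁻¹ * x * g ∈ P} := by
  classical
  -- the map from cosets to conjugates
  have hwd : ∀ a b : G, (QuotientGroup.leftRel P) a b →
      Subgroup.map (MulAut.conj a).toMonoidHom P = Subgroup.map (MulAut.conj b).toMonoidHom P := by
    intro a b hab
    rw [QuotientGroup.leftRel_apply] at hab
    ext y
    rw [mem_conj_iff, mem_conj_iff]
    constructor
    · intro h
      have := P.mul_mem (P.mul_mem (P.inv_mem hab) h) hab
      simpa [mul_assoc] using this
    · intro h
      have := P.mul_mem (P.mul_mem hab h) (P.inv_mem hab)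
      simpa [mul_assoc] using this
  let ψ : G ⧸ P → Subgroup G := Quotient.lift (fun g => Subgroup.map (MulAut.conj g).toMonoidHom P) hwd
  have hψ : ∀ g : G, ψ (QuotientGroup.mk g) = Subgroup.map (MulAut.conj g).toMonoidHom P :=
    fun g => rfl
  have hψinj : Function.Injective ψ := by
    intro a b
    induction a using Quotient.inductionOn' with
    | h a =>
    induction b using Quotient.inductionOn' with
    | h b =>
    intro hab
    have hab' : ∀ y : G, a⁻¹ * y * a ∈ P ↔ b⁻¹ * y * b ∈ P := by
      intro y
      rw [← mem_conj_iff P a y, ← mem_conj_iff P b y]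
      show y ∈ ψ (QuotientGroup.mk a) ↔ y ∈ ψ (QuotientGroup.mk b)
      rw [hab]
    have hmem : a⁻¹ * b ∈ P := by
      rw [← hP]
      rw [Subgroup.mem_normalizer_iff]
      intro h
      constructor
      · intro hh
        have : b * h * b⁻¹ ∈ Subgroup.map (MulAut.conj b).toMonoidHom P :=
          ⟨h, hh, by simp⟩
        rw [mem_conj_iff] at this
        have := (hab' (b * h * b⁻¹)).mpr (by simpa [mul_assoc] using hh)
        group at this ⊢
        simpa [mul_assoc] using this
      · intro hh
        have h1 : b⁻¹ * (b * ((a⁻¹*b)* h * (a⁻¹*b)⁻¹) * b⁻¹) * b ∈ P := by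
          simpa [mul_assoc] using hh
        have h2 := (hab' (a * ((a⁻¹*b) * h * (a⁻¹*b)⁻¹) * a⁻¹)).mp
          (by group; group at hh; simpa [mul_assoc] using hh)
        group at h2
        simpa [mul_assoc] using h2
    exact Quotient.sound' (QuotientGroup.leftRel_apply.mpr hmem)
  set t : Set (G ⧸ P) := {c | x ∈ ψ c} with ht
  -- conjugates containing x ≃ t
  have e1 : t ≃ {Q : Subgroup G //
      (∃ g : G, Q = Subgroup.map (MulAut.conj g).toMonoidHom P) ∧ x ∈ Q} := by
    have hex : ∀ c : G ⧸ P, ∃ g : G, ψ c = Subgroup.map (MulAut.conj g).toMonoidHom P := by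
      intro c
      induction c using Quotient.inductionOn' with
      | h a => exact ⟨a, rfl⟩
    refine Equiv.ofBijective (fun c => ⟨ψ c.1, hex c.1, c.2⟩) ⟨?_, ?_⟩
    · intro a b hab
      have := congrArg Subtype.val hab
      exact Subtype.ext (hψinj this)
    · rintro ⟨Q, ⟨g, rfl⟩, hx⟩
      exact ⟨⟨QuotientGroup.mk g, by simpa [ht, hψ] using hx⟩, rfl⟩
  have e2 : {g : G // g⁻¹ * x * g ∈ P} ≃ (QuotientGroup.mk ⁻¹' t : Set G) := by
    refine Equiv.subtypeEquivRight fun g => ?_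
    rw [← mem_conj_iff P g x]
    exact Iff.rfl
  calc Nat.card {Q : Subgroup G //
        (∃ g : G, Q = Subgroup.map (MulAut.conj g).toMonoidHom P) ∧ x ∈ Q} * Nat.card P
      = Nat.card t * Nat.card P := by rw [Nat.card_congr e1]
    _ = Nat.card (P × t) := by rw [Nat.card_prod, mul_comm]
    _ = Nat.card (QuotientGroup.mk ⁻¹' t : Set G) :=
        (Nat.card_congr (QuotientGroup.preimageMkEquivSubgroupProdSet P t)).symm
    _ = Nat.card {g : G // g⁻¹ * x * g ∈ P} := (Nat.card_congr e2).symm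


/-- (1): Burnside count for the conjugation action of `P` on `G`. -/
lemma aux1 (P : Subgroup G) [Fintype P] :
    Nat.card {O : Set G // ∃ x : G, O = {y : G | ∃ p ∈ P, y = p * x * p⁻¹}} * Nat.card P
      = ∑ p : P, Nat.card {b : G // (p : G) * b = b * (p : G)} := by
  classical
  set Q : Subgroup (ConjAct G) := P.map (ConjAct.toConjAct (G := G)).toMonoidHom with hQ
  letI : Fintype Q := Fintype.ofFinite _
  letI : ∀ a : Q, Fintype (fixedBy G a) := fun a => Fintype.ofFinite _
  letI : Fintype (Quotient (orbitRel Q G)) := Fintype.ofFinite _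
  have horb : ∀ x : G, orbit Q x = {y : G | ∃ p ∈ P, y = p * x * p⁻¹} := by
    intro x
    ext y
    rw [mem_orbit_iff]
    constructor
    · rintro ⟨⟨q, p, hp, rfl⟩, rfl⟩
      exact ⟨p, hp, by
        show ConjAct.toConjAct p • x = p * x * p⁻¹
        exact ConjAct.toConjAct_smul p x⟩
    · rintro ⟨p, hp, rfl⟩
      refine ⟨⟨ConjAct.toConjAct p, p, hp, rfl⟩, ?_⟩
      show ConjAct.toConjAct p • x = p * x * p⁻¹
      exact ConjAct.toConjAct_smul p x
  have F : orbitRel.Quotient Q G ≃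
      {O : Set G // ∃ x : G, O = {y : G | ∃ p ∈ P, y = p * x * p⁻¹}} := by
    refine Equiv.ofBijective (fun ω => ⟨ω.orbit, ?_⟩) ⟨?_, ?_⟩
    · induction ω using Quotient.inductionOn' with
      | h a =>
        refine ⟨a, ?_⟩
        simp only [orbitRel.Quotient.orbit_mk, horb]
    · intro a b
      refine Quotient.inductionOn₂' a b fun a b hab => ?_
      have h := congrArg Subtype.val hab
      simp only [orbitRel.Quotient.orbit_mk] at h
      have hmem : a ∈ orbit Q b := h ▸ mem_orbit_self a
      exact Quotient.sound' (orbitRel_apply.mpr hmem)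
    · rintro ⟨O, x, rfl⟩
      refine ⟨Quotient.mk'' x, Subtype.ext ?_⟩
      simp only [orbitRel.Quotient.orbit_mk, horb]
  obtain ⟨eP, heP⟩ : ∃ e : P ≃ Q, ∀ p : P, ((e p : Q) : ConjAct G) = ConjAct.toConjAct (p : G) := by
    refine ⟨Equiv.ofBijective (fun p => ⟨ConjAct.toConjAct (p : G), (p : G), p.2, rfl⟩)
      ⟨?_, ?_⟩, fun p => rfl⟩
    · intro a b hab
      have := congrArg (fun q : Q => ConjAct.ofConjAct (q : ConjAct G)) hab
      simpa using Subtype.ext this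
    · rintro ⟨q, p, hp, rfl⟩
      exact ⟨⟨p, hp⟩, rfl⟩
  have hBurn := MulAction.sum_card_fixedBy_eq_card_orbits_mul_card_group (G := Q) (X := G)
  simp only [← Nat.card_eq_fintype_card] at hBurn
  rw [Nat.card_congr F.symm, Nat.card_congr eP]
  rw [show Nat.card (orbitRel.Quotient Q G) = Nat.card (Quotient (orbitRel Q G)) from rfl,
    ← hBurn]
  refine (Fintype.sum_equiv eP (fun p => Nat.card {b : G // (p : G) * b = b * (p : G)})
    (fun q => Nat.card (fixedBy G q)) fun p => ?_).symm
  have hset : fixedBy G (eP p) = {b : G | (p : G) * b * (p : G)⁻¹ = b} := by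
    ext b
    show (eP p) • b = b ↔ _
    rw [Submonoid.smul_def, heP p, ConjAct.toConjAct_smul]
    rfl
  show Nat.card {b : G // (p : G) * b = b * (p : G)} = Nat.card (fixedBy G (eP p))
  rw [hset]
  exact Nat.card_congr (Equiv.subtypeEquivRight fun b => by
    simp only [Set.mem_setOf_eq, mul_inv_eq_iff_eq_mul])

/-- (3): double counting. -/
lemma aux3 (P : Subgroup G) [Fintype P] (R : Finset G)
    (hR : ∀ x : G, ∃! y : G, y ∈ R ∧ IsConj x y) :
    ∑ x ∈ R, Nat.card {g : G // g⁻¹ * x * g ∈ P}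
      = ∑ p : P, Nat.card {b : G // (p : G) * b = b * (p : G)} := by
  classical
  have hfib : ∀ x : G, Nat.card {g : G // g⁻¹ * x * g ∈ P}
      = ∑ p : P, Nat.card {g : G // g⁻¹ * x * g = (p : G)} := by
    intro x
    have e : {g : G // g⁻¹ * x * g ∈ P} ≃ Σ p : P, {g : G // g⁻¹ * x * g = (p : G)} := by
      refine Equiv.ofBijective (fun g => ⟨⟨g.1⁻¹ * x * g.1, g.2⟩, ⟨g.1, rfl⟩⟩) ⟨?_, ?_⟩
      · intro a b hab
        have : ((fun (g : {g : G // g⁻¹ * x * g ∈ P}) =>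
            (⟨⟨g.1⁻¹ * x * g.1, g.2⟩, ⟨g.1, rfl⟩⟩ :
              Σ p : P, {g : G // g⁻¹ * x * g = (p : G)})) a).2.1
            = ((fun (g : {g : G // g⁻¹ * x * g ∈ P}) =>
            (⟨⟨g.1⁻¹ * x * g.1, g.2⟩, ⟨g.1, rfl⟩⟩ :
              Σ p : P, {g : G // g⁻¹ * x * g = (p : G)})) b).2.1 := by rw [hab]
        exact Subtype.ext this
      · rintro ⟨⟨p, hp⟩, ⟨g, hg⟩⟩
        refine ⟨⟨g, by rw [hg]; exact hp⟩, ?_⟩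
        refine Sigma.ext (Subtype.ext hg) ?_
        refine (Subtype.heq_iff_coe_eq fun y => ?_).mpr rfl
        show y⁻¹ * x * y = g⁻¹ * x * g ↔ y⁻¹ * x * y = p
        rw [hg]
    rw [Nat.card_congr e, Nat.card_eq_fintype_card, Fintype.card_sigma]
    exact Finset.sum_congr rfl fun p _ => (Nat.card_eq_fintype_card).symm
  have hcard : ∀ (x : G) (p : P), Nat.card {g : G // g⁻¹ * x * g = (p : G)}
      = if IsConj x (p : G) then Nat.card {b : G // (p : G) * b = b * (p : G)} else 0 := by
    intro x p
    by_cases hc : IsConj x (p : G)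
    · rw [if_pos hc]
      rw [isConj_iff] at hc
      obtain ⟨c, hc'⟩ := hc
      have hk : (c⁻¹)⁻¹ * x * c⁻¹ = (p : G) := by rw [← hc']; group
      set k := c⁻¹ with hkdef
      have hf : ∀ b : {b : G // (p : G) * b = b * (p : G)},
          (k * b.1)⁻¹ * x * (k * b.1) = (p : G) := by
        rintro ⟨b, hb⟩
        show (k * b)⁻¹ * x * (k * b) = (p : G)
        rw [mul_inv_rev]
        calc b⁻¹ * k⁻¹ * x * (k * b) = b⁻¹ * (k⁻¹ * x * k) * b := by group
          _ = b⁻¹ * ((p : G) * b) := by rw [hk]; group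
          _ = b⁻¹ * (b * (p : G)) := by rw [hb]
          _ = (p : G) := by group
      refine (Nat.card_congr (Equiv.ofBijective
        (fun b => (⟨k * b.1, hf b⟩ : {g : G // g⁻¹ * x * g = (p : G)})) ⟨?_, ?_⟩)).symm
      · intro a b hab
        have := congrArg Subtype.val hab
        exact Subtype.ext (by simpa using this)
      · rintro ⟨g, hg⟩
        have hcomm : (p : G) * (k⁻¹ * g) = (k⁻¹ * g) * (p : G) := by
          calc (p : G) * (k⁻¹ * g) = (k⁻¹ * x * k) * (k⁻¹ * g) := by rw [hk]
            _ = k⁻¹ * g * (g⁻¹ * x * g) := by group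
            _ = (k⁻¹ * g) * (p : G) := by rw [hg]
        exact ⟨⟨k⁻¹ * g, hcomm⟩, Subtype.ext (by group)⟩
    · rw [if_neg hc, Nat.card_eq_zero]
      left
      refine ⟨fun s => ?_⟩
      obtain ⟨g, hg⟩ := s
      exact hc (isConj_iff.mpr ⟨g⁻¹, by rw [← hg]; group⟩)
  calc ∑ x ∈ R, Nat.card {g : G // g⁻¹ * x * g ∈ P}
      = ∑ x ∈ R, ∑ p : P, Nat.card {g : G // g⁻¹ * x * g = (p : G)} :=
        Finset.sum_congr rfl fun x _ => hfib x
    _ = ∑ p : P, ∑ x ∈ R, Nat.card {g : G // g⁻¹ * x * g = (p : G)} := Finset.sum_comm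
    _ = ∑ p : P, Nat.card {b : G // (p : G) * b = b * (p : G)} := by
        refine Finset.sum_congr rfl fun p _ => ?_
        obtain ⟨y, ⟨hyR, hyc⟩, huniq⟩ := hR (p : G)
        rw [Finset.sum_eq_single_of_mem y hyR]
        · rw [hcard y p, if_pos hyc.symm]
        · intro x hxR hxy
          rw [hcard x p]
          rw [if_neg]
          intro hconj
          exact hxy (huniq x ⟨hxR, hconj.symm⟩)

end Aux

/-- Let `G` be a finite group and `P` a self-normalizing subgroup. For `x ∈ G` let `f x`
be the number of `G`-conjugates of `P` containing `x`. Then the number of orbits of `P`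
acting on `G` by conjugation equals the sum of `f x` over a set `R` of representatives of
the conjugacy classes of `G`. -/
theorem stmt3 {G : Type*} [Group G] [Fintype G] [DecidableEq G] (P : Subgroup G)
    (hP : Subgroup.normalizer (P : Set G) = P) (R : Finset G)
    (hR : ∀ x : G, ∃! y : G, y ∈ R ∧ IsConj x y) :
    Nat.card {O : Set G // ∃ x : G, O = {y : G | ∃ p ∈ P, y = p * x * p⁻¹}} =
      ∑ x ∈ R, Nat.card {Q : Subgroup G //
        (∃ g : G, Q = Subgroup.map (MulAut.conj g).toMonoidHom P) ∧ x ∈ Q} := by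
  classical
  have hPpos : 0 < Nat.card P := Nat.card_pos
  apply Nat.eq_of_mul_eq_mul_right hPpos
  rw [Finset.sum_mul]
  -- rewrite each summand via aux2
  have hsum : ∑ x ∈ R, (Nat.card {Q : Subgroup G //
        (∃ g : G, Q = Subgroup.map (MulAut.conj g).toMonoidHom P) ∧ x ∈ Q} * Nat.card P)
      = ∑ x ∈ R, Nat.card {g : G // g⁻¹ * x * g ∈ P} := by
    refine Finset.sum_congr rfl fun x _ => aux2 P hP x
  rw [hsum]
  letI : Fintype P := Fintype.ofFinite _
  rw [aux3 P R hR, aux1 P]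
end

section
/- Let F be a field, n a positive integer, and d = (d_1, …, d_t) an n-dimension vector. Let P be the subgroup of GL_n(F) consisting of all g that stabilize the standard flag of type d (g V_i = V_i for every i). Then P is self-normalizing in GL_n(F): N_{GL_n(F)}(P) = P. -/
open scoped MatrixGroups

/-- The subspace of `Fin n → F` spanned by the first `k` standard basis vectors. -/
def stdSub (F : Type*) [Field F] (n k : ℕ) : Submodule F (Fin n → F) where
  carrier := {v | ∀ j : Fin n, k ≤ (j : ℕ) → v j = 0}
  add_mem' := by
    intro a b ha hb j hj
    have h1 := ha j hj
    have h2 := hb j hj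
    simp_all [Pi.add_apply]
  zero_mem' := by intro j hj; rfl
  smul_mem' := by
    intro c a ha j hj
    have h1 := ha j hj
    simp_all [Pi.smul_apply]

/-- The parabolic subgroup of `GL n F` stabilizing the standard flag of type `d`. -/
def parabolic (F : Type*) [Field F] (n : ℕ) {t : ℕ} (d : Fin t → ℕ) :
    Subgroup (GL (Fin n) F) where
  carrier := {g | ∀ i : Fin t,
    (stdSub F n (d i)).map (Matrix.mulVecLin ((g : Matrix (Fin n) (Fin n) F))) = stdSub F n (d i)}
  one_mem' := by
    intro i
    simp [Units.val_one, Matrix.mulVecLin_one, Submodule.map_id]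
  mul_mem' := by
    intro a b ha hb i
    rw [Units.val_mul, Matrix.mulVecLin_mul, Submodule.map_comp, hb i, ha i]
  inv_mem' := by
    intro a ha i
    conv_lhs => rw [← ha i]
    rw [← Submodule.map_comp, ← Matrix.mulVecLin_mul, ← Units.val_mul, inv_mul_cancel,
      Units.val_one, Matrix.mulVecLin_one, Submodule.map_id]

section Aux

open Matrix

variable {F : Type*} [Field F] {n : ℕ}

lemma mem_stdSub {k : ℕ} {v : Fin n → F} :
    v ∈ stdSub F n k ↔ ∀ j : Fin n, k ≤ (j : ℕ) → v j = 0 := Iff.rfl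

lemma single_mem_stdSub {k : ℕ} {j : Fin n} (h : (j : ℕ) < k) (c : F) :
    Pi.single j c ∈ stdSub F n k := by
  intro x hx
  have hxj : x ≠ j := by
    intro hxj; rw [hxj] at hx; omega
  simp [Pi.single_apply, hxj]

lemma stdSub_mono {k k' : ℕ} (h : k ≤ k') : stdSub F n k ≤ stdSub F n k' := by
  intro v hv j hj
  exact hv j (le_trans h hj)

lemma stdSub_lt {k k' : ℕ} (h : k < k') (hn : k < n) : stdSub F n k < stdSub F n k' := by
  refine lt_of_le_of_ne (stdSub_mono h.le) fun heq => ?_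
  have h1 : Pi.single (⟨k, hn⟩ : Fin n) (1 : F) ∈ stdSub F n k' := single_mem_stdSub h 1
  rw [← heq] at h1
  have := h1 ⟨k, hn⟩ le_rfl
  simp at this

/-- Transvection as an element of `GL`. -/
def tGL (a b : Fin n) (hab : a ≠ b) (c : F) : GL (Fin n) F :=
  ⟨Matrix.transvection a b c, Matrix.transvection a b (-c),
    by rw [Matrix.transvection_mul_transvection_same _ _ hab, add_neg_cancel,
        Matrix.transvection_zero],
    by rw [Matrix.transvection_mul_transvection_same _ _ hab, neg_add_cancel,
        Matrix.transvection_zero]⟩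

lemma transvection_mulVec (a b : Fin n) (c : F) (v : Fin n → F) :
    (Matrix.transvection a b c).mulVec v = v + Pi.single a (c * v b) := by
  rw [Matrix.transvection, Matrix.add_mulVec, Matrix.one_mulVec,
    Matrix.single_mulVec]
  congr 1

lemma mem_parabolic_iff {t : ℕ} {d : Fin t → ℕ} {g : GL (Fin n) F} :
    g ∈ parabolic F n d ↔ ∀ i : Fin t,
      (stdSub F n (d i)).map (Matrix.mulVecLin ((g : Matrix (Fin n) (Fin n) F))) =
        stdSub F n (d i) := Iff.rfl

lemma map_eq_self_of_stab {g : GL (Fin n) F} {W : Submodule F (Fin n → F)}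
    (h1 : ∀ v ∈ W, (g : Matrix (Fin n) (Fin n) F).mulVec v ∈ W)
    (h2 : ∀ v ∈ W, ((g⁻¹ : GL (Fin n) F) : Matrix (Fin n) (Fin n) F).mulVec v ∈ W) :
    W.map (Matrix.mulVecLin ((g : Matrix (Fin n) (Fin n) F))) = W := by
  apply le_antisymm
  · rintro y ⟨x, hx, rfl⟩
    exact h1 x hx
  · intro y hy
    refine ⟨((g⁻¹ : GL (Fin n) F) : Matrix (Fin n) (Fin n) F).mulVec y, h2 y hy, ?_⟩
    rw [Matrix.mulVecLin_apply, Matrix.mulVec_mulVec, ← Units.val_mul, mul_inv_cancel,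
      Units.val_one, Matrix.one_mulVec]

lemma tGL_mem_parabolic {t : ℕ} {d : Fin t → ℕ} {a b : Fin n} (hab : a ≠ b) (c : F)
    (h : ∀ i : Fin t, d i ≤ (a : ℕ) → d i ≤ (b : ℕ)) :
    tGL a b hab c ∈ parabolic F n d := by
  have key : ∀ (c' : F), ∀ i : Fin t, ∀ v ∈ stdSub F n (d i),
      (Matrix.transvection a b c').mulVec v ∈ stdSub F n (d i) := by
    intro c' i v hv x hx
    rw [transvection_mulVec]
    have hvx : v x = 0 := hv x hx
    by_cases hxa : x = a
    · subst hxa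
      have hvb : v b = 0 := hv b ((h i hx).trans le_rfl)
      simp [hvx, hvb]
    · simp [hvx, Pi.single_apply, hxa]
  intro i
  exact map_eq_self_of_stab (fun v hv => key c i v hv) (fun v hv => key (-c) i v hv)

end Aux
section Classify

variable {F : Type*} [Field F] {n : ℕ}

lemma classify {t : ℕ} (d : Fin (t + 1) → ℕ) (hmono : StrictMono d)
    (hlast : d (Fin.last t) = n) (W : Submodule F (Fin n → F))
    (hW : ∀ g ∈ parabolic F n d, ∀ v ∈ W,
      ((g : GL (Fin n) F) : Matrix (Fin n) (Fin n) F).mulVec v ∈ W)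
    (hne : W ≠ ⊥) : ∃ i, W = stdSub F n (d i) := by
  classical
  obtain ⟨v0, hv0W, hv0⟩ := W.ne_bot_iff.mp hne
  -- the set of coordinates where some element of W is nonzero
  set T : Finset (Fin n) := Finset.univ.filter fun j => ∃ w ∈ W, w j ≠ 0 with hT
  have hTne : T.Nonempty := by
    obtain ⟨j, hj⟩ := Function.ne_iff.mp hv0
    exact ⟨j, Finset.mem_filter.mpr ⟨Finset.mem_univ _, v0, hv0W, hj⟩⟩
  set m : Fin n := T.max' hTne with hm
  have hmax : ∀ w ∈ W, ∀ j : Fin n, m < j → w j = 0 := by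
    intro w hw j hj
    by_contra hwj
    have : j ∈ T := Finset.mem_filter.mpr ⟨Finset.mem_univ _, w, hw, hwj⟩
    exact absurd (T.le_max' j this) (not_le.mpr hj)
  have hmem : ∃ v ∈ W, v m ≠ 0 := (Finset.mem_filter.mp (T.max'_mem hTne)).2
  -- the minimal block index containing m
  set I : Finset (Fin (t + 1)) := Finset.univ.filter fun i => (m : ℕ) < d i with hI
  have hIne : I.Nonempty :=
    ⟨Fin.last t, Finset.mem_filter.mpr ⟨Finset.mem_univ _, by rw [hlast]; exact m.isLt⟩⟩
  set i : Fin (t + 1) := I.min' hIne with hi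
  have him : (m : ℕ) < d i := (Finset.mem_filter.mp (I.min'_mem hIne)).2
  have hmin : ∀ i' : Fin (t + 1), (m : ℕ) < d i' → d i ≤ d i' := fun i' hi' =>
    hmono.monotone (I.min'_le i' (Finset.mem_filter.mpr ⟨Finset.mem_univ _, hi'⟩))
  obtain ⟨v, hvW, hvm⟩ := hmem
  -- all basis vectors `e_j` with `j < d i` lie in `W`
  have hsingle' : ∀ j : Fin n, j ≠ m → (j : ℕ) < d i → Pi.single j (1 : F) ∈ W := by
    intro j hjm hj
    have hcond : ∀ i' : Fin (t + 1), d i' ≤ (j : ℕ) → d i' ≤ (m : ℕ) := by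
      intro i' hi'
      by_contra hc
      exact absurd (hmin i' (not_le.mp hc)) (by omega)
    have hg := tGL_mem_parabolic (F := F) hjm 1 hcond
    have h1 : ((tGL j m hjm (1 : F) : GL (Fin n) F) :
        Matrix (Fin n) (Fin n) F).mulVec v ∈ W := hW _ hg v hvW
    have h2 : (Matrix.transvection j m (1 : F)).mulVec v ∈ W := h1
    rw [transvection_mulVec] at h2
    have h3 : Pi.single j (v m) ∈ W := by
      have := W.sub_mem h2 hvW
      simpa using this
    have h4 : Pi.single j ((v m)⁻¹ * v m) ∈ W := by
      have := W.smul_mem (v m)⁻¹ h3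
      rwa [← Pi.single_smul', smul_eq_mul] at this
    rwa [inv_mul_cancel₀ hvm] at h4
  have hsingle : ∀ j : Fin n, (j : ℕ) < d i → Pi.single j (1 : F) ∈ W := by
    intro j hj
    by_cases hjm : j = m
    · rw [hjm]
      -- build `e_m` from `v` by subtracting the other coordinates
      have hw : v - ∑ x ∈ Finset.univ.erase m, Pi.single x (v x) ∈ W := by
        refine W.sub_mem hvW (Submodule.sum_mem W ?_)
        intro x hx
        have hxm : x ≠ m := (Finset.mem_erase.mp hx).1
        by_cases hxd : (x : ℕ) < d i
        · have h5 := W.smul_mem (v x) (hsingle' x hxm hxd)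
          rwa [← Pi.single_smul', smul_eq_mul, mul_one] at h5
        · have hmx : m < x := by
            rw [← Fin.val_fin_lt]; omega
          rw [hmax v hvW x hmx]
          simp
      have heq : v - ∑ x ∈ Finset.univ.erase m, Pi.single x (v x) = Pi.single m (v m) := by
        have h6 : Pi.single m (v m) + ∑ x ∈ Finset.univ.erase m, Pi.single x (v x) = v :=
          (Finset.add_sum_erase _ (fun x => Pi.single x (v x)) (Finset.mem_univ m)).trans
            (Finset.univ_sum_single v)
        rw [sub_eq_iff_eq_add]; exact h6.symm
      rw [heq] at hw
      have h4 := W.smul_mem (v m)⁻¹ hw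
      rw [← Pi.single_smul', smul_eq_mul, inv_mul_cancel₀ hvm] at h4
      exact h4
    · exact hsingle' j hjm hj
  refine ⟨i, le_antisymm ?_ ?_⟩
  · intro w hw x hx
    refine hmax w hw x ?_
    rw [← Fin.val_fin_lt]; omega
  · intro u hu
    have : u = ∑ x : Fin n, Pi.single x (u x) := (Finset.univ_sum_single u).symm
    rw [this]
    refine Submodule.sum_mem W ?_
    intro x _
    by_cases hxd : (x : ℕ) < d i
    · have h5 := W.smul_mem (u x) (hsingle x hxd)
      rwa [← Pi.single_smul', smul_eq_mul, mul_one] at h5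
    · rw [hu x (by omega)]
      simp

end Classify
section Main

variable {F : Type*} [Field F] {n : ℕ}

lemma map_stdSub_eq {t : ℕ} {d : Fin (t + 1) → ℕ} (hn : 0 < n) (hmono : StrictMono d)
    (hpos : 0 < d 0) (hlast : d (Fin.last t) = n) (u : GL (Fin n) F)
    (hu : u ∈ Subgroup.normalizer (parabolic F n d : Set (GL (Fin n) F))) (i : Fin (t + 1)) :
    ∃ i', (stdSub F n (d i)).map
      (Matrix.mulVecLin ((u : Matrix (Fin n) (Fin n) F))) = stdSub F n (d i') := by
  rw [Subgroup.mem_normalizer_iff''] at hu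
  set W := (stdSub F n (d i)).map (Matrix.mulVecLin ((u : Matrix (Fin n) (Fin n) F))) with hW
  have hstab : ∀ g ∈ parabolic F n d, ∀ v ∈ W,
      ((g : GL (Fin n) F) : Matrix (Fin n) (Fin n) F).mulVec v ∈ W := by
    rintro p hp v ⟨x, hx, rfl⟩
    have hp' : u⁻¹ * p * u ∈ parabolic F n d := (hu p).mp hp
    have hx' : (((u⁻¹ * p * u : GL (Fin n) F) :
        Matrix (Fin n) (Fin n) F)).mulVec x ∈ stdSub F n (d i) := by
      have := hp' i
      rw [← this]
      exact ⟨x, hx, rfl⟩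
    refine ⟨_, hx', ?_⟩
    rw [Matrix.mulVecLin_apply, Matrix.mulVecLin_apply, Matrix.mulVec_mulVec,
      Matrix.mulVec_mulVec, ← Units.val_mul, ← Units.val_mul]
    group
  have hne : W ≠ ⊥ := by
    rw [Submodule.ne_bot_iff]
    set e : Fin n → F := Pi.single (⟨0, hn⟩ : Fin n) (1 : F) with he
    have hed : e ∈ stdSub F n (d i) := by
      refine single_mem_stdSub ?_ 1
      have : d 0 ≤ d i := hmono.monotone (Fin.zero_le i)
      simpa using lt_of_lt_of_le hpos this
    refine ⟨(u : Matrix (Fin n) (Fin n) F).mulVec e, ⟨e, hed, rfl⟩, ?_⟩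
    intro hcon
    have : ((u⁻¹ : GL (Fin n) F) : Matrix (Fin n) (Fin n) F).mulVec
        ((u : Matrix (Fin n) (Fin n) F).mulVec e) = 0 := by
      rw [hcon, Matrix.mulVec_zero]
    rw [Matrix.mulVec_mulVec, ← Units.val_mul, inv_mul_cancel, Units.val_one,
      Matrix.one_mulVec] at this
    have he0 : e ⟨0, hn⟩ = (1 : F) := by simp [he]
    rw [this] at he0
    simp at he0
  exact classify d hmono hlast W hstab hne

end Main

/-- The parabolic subgroup `P` of `GL_n(F)` stabilizing the standard flag of type `d` is
self-normalizing: `N_{GL_n(F)}(P) = P`. -/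
theorem stmt4 (F : Type*) [Field F] (n t : ℕ) (hn : 0 < n) (d : Fin (t + 1) → ℕ)
    (hmono : StrictMono d) (hpos : 0 < d 0) (hlast : d (Fin.last t) = n) :
    Subgroup.normalizer (parabolic F n d : Set (GL (Fin n) F)) = parabolic F n d := by
  refine le_antisymm ?_ Subgroup.le_normalizer
  intro g hg
  have hdn : ∀ i, d i ≤ n := fun i => hlast ▸ hmono.monotone (Fin.le_last i)
  have hVinj : ∀ a b : Fin (t + 1), stdSub F n (d a) = stdSub F n (d b) → a = b := by
    intro a b hab
    rcases lt_trichotomy a b with h | h | h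
    · exact absurd hab (stdSub_lt (hmono h) (lt_of_lt_of_le (hmono h) (hdn b))).ne
    · exact h
    · exact absurd hab.symm (stdSub_lt (hmono h) (lt_of_lt_of_le (hmono h) (hdn a))).ne
  have hginv : g⁻¹ ∈ Subgroup.normalizer (parabolic F n d : Set (GL (Fin n) F)) := inv_mem hg
  choose σ hσ using map_stdSub_eq hn hmono hpos hlast g hg
  choose τ hτ using map_stdSub_eq hn hmono hpos hlast g⁻¹ hginv
  -- composing the two maps gives back the original subspace
  have hcomp : ∀ i : Fin (t + 1), Submodule.map (Matrix.mulVecLin ((g : Matrix (Fin n) (Fin n) F)))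
      (Submodule.map (Matrix.mulVecLin (((g⁻¹ : GL (Fin n) F) : Matrix (Fin n) (Fin n) F)))
        (stdSub F n (d i))) = stdSub F n (d i) := by
    intro i
    rw [← Submodule.map_comp, ← Matrix.mulVecLin_mul, ← Units.val_mul, mul_inv_cancel,
      Units.val_one, Matrix.mulVecLin_one, Submodule.map_id]
  have hcomp' : ∀ i : Fin (t + 1),
      Submodule.map (Matrix.mulVecLin (((g⁻¹ : GL (Fin n) F) : Matrix (Fin n) (Fin n) F)))
      (Submodule.map (Matrix.mulVecLin ((g : Matrix (Fin n) (Fin n) F)))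
        (stdSub F n (d i))) = stdSub F n (d i) := by
    intro i
    rw [← Submodule.map_comp, ← Matrix.mulVecLin_mul, ← Units.val_mul, inv_mul_cancel,
      Units.val_one, Matrix.mulVecLin_one, Submodule.map_id]
  have hστ : ∀ i, σ (τ i) = i := by
    intro i
    apply hVinj
    rw [← hσ (τ i), ← hτ i, hcomp i]
  have htσ : ∀ i, τ (σ i) = i := by
    intro i
    apply hVinj
    rw [← hτ (σ i), ← hσ i, hcomp' i]
  -- σ is strictly monotone
  have hginj : Function.Injective (Matrix.mulVecLin ((g : Matrix (Fin n) (Fin n) F))) := by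
    have h2 : ∀ y : Fin n → F, ((g⁻¹ : GL (Fin n) F) : Matrix (Fin n) (Fin n) F).mulVec
        ((g : Matrix (Fin n) (Fin n) F).mulVec y) = y := by
      intro y
      rw [Matrix.mulVec_mulVec, ← Units.val_mul, inv_mul_cancel, Units.val_one,
        Matrix.one_mulVec]
    intro x y hxy
    simp only [Matrix.mulVecLin_apply] at hxy
    rw [← h2 x, ← h2 y, hxy]
  have hσmono : StrictMono σ := by
    intro a b hab
    have hle : stdSub F n (d (σ a)) ≤ stdSub F n (d (σ b)) := by
      rw [← hσ a, ← hσ b]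
      exact Submodule.map_mono (stdSub_mono (hmono hab).le)
    have hne : stdSub F n (d (σ a)) ≠ stdSub F n (d (σ b)) := by
      rw [← hσ a, ← hσ b]
      intro hcon
      have := Submodule.map_injective_of_injective hginj hcon
      exact absurd (hVinj _ _ this) hab.ne
    rcases lt_trichotomy (σ a) (σ b) with h | h | h
    · exact h
    · exact absurd (congrArg (fun x => stdSub F n (d x)) h) hne
    · have hlt : stdSub F n (d (σ b)) < stdSub F n (d (σ a)) :=
        stdSub_lt (hmono h) (lt_of_lt_of_le (hmono h) (hdn (σ a)))
      exact absurd (hle.trans_lt hlt) (lt_irrefl _)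
  haveI : WellFoundedLT (Fin (t + 1)) := inferInstance
  have hσid : σ = id := by
    refine (hσmono.range_inj strictMono_id).mp ?_
    rw [Set.range_id]
    exact Set.range_eq_univ.mpr fun i => ⟨τ i, hστ i⟩
  intro i
  have := hσ i
  rw [hσid] at this
  exact this
end

section
/- For every prime power q, let B be the subgroup of GL_2(q) consisting of the invertible upper triangular 2×2 matrices. Then the number of orbits of the action of B on GL_2(q) by conjugation equals 2q(q − 1). -/
open scoped MatrixGroups

/-- The number of orbits of a subset `P` of a group `G` acting on `G` by conjugation,
counted as the number of distinct conjugation orbits `{p * x * p⁻¹ : p ∈ P}`. -/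
noncomputable def numConjOrbits {G : Type*} [Group G] (P : Set G) : ℕ :=
  Nat.card {O : Set G // ∃ x : G, O = {y : G | ∃ p ∈ P, y = p * x * p⁻¹}}

namespace Stmt11Aux

variable {F : Type} [Field F]

local notation "M2" => Matrix (Fin 2) (Fin 2) F

/-- The classifying type for the `B`-conjugation orbits on `GL 2 F`. -/
abbrev S (F : Type) [Field F] := {a : F // a ≠ 0}

abbrev C (F : Type) [Field F] := ((S F × S F) ⊕ S F) ⊕ (F × S F)

/-- The Borel subgroup as a set. -/
def Sset (F : Type) [Field F] : Set (GL (Fin 2) F) :=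
  {g : GL (Fin 2) F | ∀ i j : Fin 2, j < i → (g : Matrix (Fin 2) (Fin 2) F) i j = 0}

lemma mem_iff (g : GL (Fin 2) F) :
    g ∈ Sset F ↔ (g : M2) 1 0 = 0 := by
  constructor
  · intro h
    exact h 1 0 (by decide)
  · intro h i j hij
    fin_cases i <;> fin_cases j <;> first
      | exact absurd hij (by decide)
      | simpa using h

lemma det_entries (g : GL (Fin 2) F) :
    (g : M2) 0 0 * (g : M2) 1 1 - (g : M2) 0 1 * (g : M2) 1 0 ≠ 0 := by
  have h : IsUnit (Matrix.det (g : M2)) := (Matrix.isUnit_iff_isUnit_det _).mp g.isUnit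
  rw [Matrix.det_fin_two] at h
  exact h.ne_zero

lemma diag_ne_zero (g : GL (Fin 2) F) (h : (g : M2) 1 0 = 0) :
    (g : M2) 0 0 ≠ 0 ∧ (g : M2) 1 1 ≠ 0 := by
  have h2 := det_entries g
  rw [h, mul_zero, sub_zero] at h2
  exact ⟨left_ne_zero_of_mul h2, right_ne_zero_of_mul h2⟩

open Classical in
/-- The invariant classifying the `B`-orbit of an element of `GL 2 F`. -/
noncomputable def inv2 (g : GL (Fin 2) F) : C F :=
  if hc : (g : M2) 1 0 = 0 then
    if hb : (g : M2) 0 0 = (g : M2) 1 1 ∧ (g : M2) 0 1 ≠ 0 then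
      Sum.inl (Sum.inr ⟨(g : M2) 0 0, (diag_ne_zero g hc).1⟩)
    else
      Sum.inl (Sum.inl (⟨(g : M2) 0 0, (diag_ne_zero g hc).1⟩,
        ⟨(g : M2) 1 1, (diag_ne_zero g hc).2⟩))
  else
    Sum.inr ((g : M2) 0 0 + (g : M2) 1 1,
      ⟨(g : M2) 0 0 * (g : M2) 1 1 - (g : M2) 0 1 * (g : M2) 1 0, det_entries g⟩)

/-- Canonical representatives of each class. -/
noncomputable def canon : C F → GL (Fin 2) F
  | Sum.inl (Sum.inl (a, d)) =>
      Matrix.GeneralLinearGroup.mkOfDetNeZero !![a.1, 0; 0, d.1]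
        (by rw [Matrix.det_fin_two_of]; simpa using mul_ne_zero a.2 d.2)
  | Sum.inl (Sum.inr a) =>
      Matrix.GeneralLinearGroup.mkOfDetNeZero !![a.1, 1; 0, a.1]
        (by rw [Matrix.det_fin_two_of]; simpa using mul_ne_zero a.2 a.2)
  | Sum.inr (t, e) =>
      Matrix.GeneralLinearGroup.mkOfDetNeZero !![t, -e.1; 1, 0]
        (by rw [Matrix.det_fin_two_of]; simpa using e.2)

lemma coe_mk (A : M2) (h : A.det ≠ 0) :
    ((Matrix.GeneralLinearGroup.mkOfDetNeZero A h : GL (Fin 2) F) : M2) = A := rfl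

lemma inv2_canon (c : C F) : inv2 (canon c) = c := by
  classical
  rcases c with (⟨⟨a, ha⟩, ⟨d, hd⟩⟩ | ⟨a, ha⟩) | ⟨t, ⟨e, he⟩⟩
  · have h10 : ((canon (Sum.inl (Sum.inl (⟨a, ha⟩, ⟨d, hd⟩))) : GL (Fin 2) F) : M2) 1 0 = 0 := by
      rw [canon, coe_mk]; simp
    rw [inv2, dif_pos h10, dif_neg]
    · simp only [canon, coe_mk]
      norm_num
    · simp only [canon, coe_mk]
      norm_num
  · have h10 : ((canon (Sum.inl (Sum.inr ⟨a, ha⟩)) : GL (Fin 2) F) : M2) 1 0 = 0 := by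
      rw [canon, coe_mk]; simp
    rw [inv2, dif_pos h10, dif_pos]
    · simp only [canon, coe_mk]
      norm_num
    · simp only [canon, coe_mk]
      norm_num
  · have h10 : ¬ ((canon (Sum.inr (t, ⟨e, he⟩)) : GL (Fin 2) F) : M2) 1 0 = 0 := by
      rw [canon, coe_mk]; simp
    rw [inv2, dif_neg h10]
    simp only [canon, coe_mk]
    norm_num

lemma one_mem' : (1 : GL (Fin 2) F) ∈ Sset F := by
  rw [mem_iff, Units.val_one]
  exact Matrix.one_apply_ne (by decide)

lemma mul_mem' {p q : GL (Fin 2) F} (hp : p ∈ Sset F) (hq : q ∈ Sset F) :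
    p * q ∈ Sset F := by
  rw [mem_iff] at hp hq ⊢
  rw [Units.val_mul]
  simp [Matrix.mul_apply, Fin.sum_univ_two, hp, hq]

lemma inv_mem' {p : GL (Fin 2) F} (hp : p ∈ Sset F) : p⁻¹ ∈ Sset F := by
  rw [mem_iff] at hp ⊢
  have hx : (p : M2) 0 0 ≠ 0 := (diag_ne_zero p hp).1
  have key : ((p⁻¹ : GL (Fin 2) F) : M2) * (p : M2) = 1 := by
    rw [← Units.val_mul, inv_mul_cancel, Units.val_one]
  have e := congrFun (congrFun key 1) 0
  simp only [Matrix.mul_apply, Fin.sum_univ_two, hp, mul_zero, add_zero,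
    Matrix.one_apply_ne (show (1 : Fin 2) ≠ 0 by decide)] at e
  exact (mul_eq_zero.mp e).resolve_right hx

lemma orb_conj {p : GL (Fin 2) F} (hp : p ∈ Sset F) (g : GL (Fin 2) F) :
    {y | ∃ q ∈ Sset F, y = q * (p * g * p⁻¹) * q⁻¹} =
      {y | ∃ q ∈ Sset F, y = q * g * q⁻¹} := by
  ext y
  constructor
  · rintro ⟨q, hq, rfl⟩
    exact ⟨q * p, mul_mem' hq hp, by group⟩
  · rintro ⟨q, hq, rfl⟩
    exact ⟨q * p⁻¹, mul_mem' hq (inv_mem' hp), by group⟩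

/-- The core computation: the effect of conjugation by an upper triangular matrix on the
invariants of a 2×2 matrix.  Here `A' * P = P * A` expresses `A' = P * A * P⁻¹`. -/
lemma conj_core (P A A' : M2) (hp : P 1 0 = 0) (hx : P 0 0 ≠ 0) (hz : P 1 1 ≠ 0)
    (key : A' * P = P * A) :
    (A' 1 0 = 0 ↔ A 1 0 = 0)
    ∧ (A' 0 0 + A' 1 1 = A 0 0 + A 1 1)
    ∧ (A' 0 0 * A' 1 1 - A' 0 1 * A' 1 0 = A 0 0 * A 1 1 - A 0 1 * A 1 0)
    ∧ (A 1 0 = 0 → A' 0 0 = A 0 0 ∧ A' 1 1 = A 1 1 ∧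
        (A 0 0 = A 1 1 → (A' 0 1 = 0 ↔ A 0 1 = 0))) := by
  have e00 := congrFun (congrFun key 0) 0
  have e01 := congrFun (congrFun key 0) 1
  have e10 := congrFun (congrFun key 1) 0
  have e11 := congrFun (congrFun key 1) 1
  simp only [Matrix.mul_apply, Fin.sum_univ_two, hp, mul_zero, zero_mul, add_zero,
    zero_add] at e00 e01 e10 e11
  -- e00 : A' 0 0 * P 0 0 = P 0 0 * A 0 0 + P 0 1 * A 1 0
  -- e01 : A' 0 0 * P 0 1 + A' 0 1 * P 1 1 = P 0 0 * A 0 1 + P 0 1 * A 1 1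
  -- e10 : A' 1 0 * P 0 0 = P 1 1 * A 1 0
  -- e11 : A' 1 0 * P 0 1 + A' 1 1 * P 1 1 = P 1 1 * A 1 1
  have hdk := congrArg Matrix.det key
  simp only [Matrix.det_mul] at hdk
  rw [Matrix.det_fin_two A', Matrix.det_fin_two P, Matrix.det_fin_two A, hp, mul_zero,
    sub_zero] at hdk
  refine ⟨?_, ?_, ?_, ?_⟩
  · constructor
    · intro h
      rw [h, zero_mul] at e10
      exact (mul_eq_zero.mp e10.symm).resolve_left hz
    · intro h
      rw [h, mul_zero] at e10
      exact (mul_eq_zero.mp e10).resolve_right hx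
  · apply mul_right_cancel₀ (mul_ne_zero hx hz)
    linear_combination P 1 1 * e00 + P 0 0 * e11 - P 0 1 * e10
  · apply mul_right_cancel₀ (mul_ne_zero hx hz)
    linear_combination hdk
  · intro hc
    have hc' : A' 1 0 = 0 := by
      rw [hc, mul_zero] at e10
      exact (mul_eq_zero.mp e10).resolve_right hx
    have ha' : A' 0 0 = A 0 0 := by
      apply mul_right_cancel₀ hx
      linear_combination e00 + P 0 1 * hc
    have hd' : A' 1 1 = A 1 1 := by
      apply mul_right_cancel₀ hz
      linear_combination e11 - P 0 1 * hc'
    refine ⟨ha', hd', ?_⟩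
    intro had
    have hb' : A' 0 1 * P 1 1 = P 0 0 * A 0 1 := by
      linear_combination e01 - P 0 1 * ha' - P 0 1 * had
    constructor
    · intro h
      rw [h, zero_mul] at hb'
      exact (mul_eq_zero.mp hb'.symm).resolve_left hx
    · intro h
      rw [h, mul_zero] at hb'
      exact (mul_eq_zero.mp hb').resolve_right hz

lemma inv2_conj (p g : GL (Fin 2) F) (hp : (p : M2) 1 0 = 0) :
    inv2 (p * g * p⁻¹) = inv2 g := by
  classical
  have hx : (p : M2) 0 0 ≠ 0 := (diag_ne_zero p hp).1
  have hz : (p : M2) 1 1 ≠ 0 := (diag_ne_zero p hp).2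
  have key : ((p * g * p⁻¹ : GL (Fin 2) F) : M2) * (p : M2) = (p : M2) * (g : M2) := by
    have h1 : (p * g * p⁻¹) * p = p * g := by group
    rw [← Units.val_mul, h1, Units.val_mul]
  obtain ⟨h1, h2, h3, h4⟩ :=
    conj_core (p : M2) (g : M2) ((p * g * p⁻¹ : GL (Fin 2) F) : M2) hp hx hz key
  by_cases hc : (g : M2) 1 0 = 0
  · have hc' : ((p * g * p⁻¹ : GL (Fin 2) F) : M2) 1 0 = 0 := h1.mpr hc
    obtain ⟨ha', hd', hflag⟩ := h4 hc
    rw [inv2, inv2, dif_pos hc', dif_pos hc]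
    by_cases hab : (g : M2) 0 0 = (g : M2) 1 1 ∧ (g : M2) 0 1 ≠ 0
    · have hab' : ((p * g * p⁻¹ : GL (Fin 2) F) : M2) 0 0 =
          ((p * g * p⁻¹ : GL (Fin 2) F) : M2) 1 1 ∧
          ((p * g * p⁻¹ : GL (Fin 2) F) : M2) 0 1 ≠ 0 := by
        refine ⟨by rw [ha', hd', hab.1], fun h0 => hab.2 ((hflag hab.1).mp h0)⟩
      rw [dif_pos hab', dif_pos hab]
      simp only [Sum.inl.injEq, Sum.inr.injEq, Subtype.mk.injEq]
      exact ha'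
    · have hab' : ¬ (((p * g * p⁻¹ : GL (Fin 2) F) : M2) 0 0 =
          ((p * g * p⁻¹ : GL (Fin 2) F) : M2) 1 1 ∧
          ((p * g * p⁻¹ : GL (Fin 2) F) : M2) 0 1 ≠ 0) := by
        rintro ⟨hh1, hh2⟩
        have had : (g : M2) 0 0 = (g : M2) 1 1 := by rw [← ha', ← hd', hh1]
        exact hab ⟨had, fun hb0 => hh2 ((hflag had).mpr hb0)⟩
      rw [dif_neg hab', dif_neg hab]
      simp only [Sum.inl.injEq, Prod.mk.injEq, Subtype.mk.injEq]
      exact ⟨ha', hd'⟩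
  · have hc' : ¬ ((p * g * p⁻¹ : GL (Fin 2) F) : M2) 1 0 = 0 := fun h => hc (h1.mp h)
    rw [inv2, inv2, dif_neg hc', dif_neg hc]
    simp only [Sum.inr.injEq, Prod.mk.injEq, Subtype.mk.injEq]
    exact ⟨h2, h3⟩

lemma conj_eq_of {p m g : GL (Fin 2) F}
    (h : (p : M2) * (g : M2) = (m : M2) * (p : M2)) : p * g * p⁻¹ = m := by
  rw [mul_inv_eq_iff_eq_mul]
  exact Units.ext (by rw [Units.val_mul, Units.val_mul]; exact h)

lemma exists_conj (g : GL (Fin 2) F) :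
    ∃ p : GL (Fin 2) F, p ∈ Sset F ∧ p * g * p⁻¹ = canon (inv2 g) := by
  classical
  by_cases hc : (g : M2) 1 0 = 0
  · by_cases hab : (g : M2) 0 0 = (g : M2) 1 1 ∧ (g : M2) 0 1 ≠ 0
    · -- conjugate !![a,b;0,a] (b ≠ 0) to !![a,1;0,a] by !![1,0;0,b]
      have hi : inv2 g = Sum.inl (Sum.inr ⟨(g : M2) 0 0, (diag_ne_zero g hc).1⟩) := by
        rw [inv2, dif_pos hc, dif_pos hab]
      refine ⟨Matrix.GeneralLinearGroup.mkOfDetNeZero !![1, 0; 0, (g : M2) 0 1]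
        (by rw [Matrix.det_fin_two_of]; simpa using hab.2), ?_, ?_⟩
      · rw [mem_iff, coe_mk]; simp
      · rw [hi]
        apply conj_eq_of
        rw [coe_mk]
        show _ = ((canon (Sum.inl (Sum.inr ⟨(g : M2) 0 0, (diag_ne_zero g hc).1⟩)) :
          GL (Fin 2) F) : M2) * _
        rw [canon, coe_mk]
        ext i j
        fin_cases i <;> fin_cases j <;>
          simp [Matrix.mul_apply, Fin.sum_univ_two, hc, hab.1] <;> ring
    · by_cases had : (g : M2) 0 0 = (g : M2) 1 1
      · -- here the off-diagonal entry is 0 : g is scalar, already canonical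
        have hb0 : (g : M2) 0 1 = 0 := by
          by_contra hb
          exact hab ⟨had, hb⟩
        have hi : inv2 g = Sum.inl (Sum.inl (⟨(g : M2) 0 0, (diag_ne_zero g hc).1⟩,
            ⟨(g : M2) 1 1, (diag_ne_zero g hc).2⟩)) := by
          rw [inv2, dif_pos hc, dif_neg hab]
        refine ⟨1, one_mem', ?_⟩
        rw [hi]
        have : g = canon (Sum.inl (Sum.inl (⟨(g : M2) 0 0, (diag_ne_zero g hc).1⟩,
            ⟨(g : M2) 1 1, (diag_ne_zero g hc).2⟩))) := by
          apply Units.ext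
          rw [canon, coe_mk]
          ext i j
          fin_cases i <;> fin_cases j <;> simp [hc, hb0]
        rw [← this]
        group
      · -- distinct diagonal entries : conjugate to the diagonal by a unipotent
        have hi : inv2 g = Sum.inl (Sum.inl (⟨(g : M2) 0 0, (diag_ne_zero g hc).1⟩,
            ⟨(g : M2) 1 1, (diag_ne_zero g hc).2⟩)) := by
          rw [inv2, dif_pos hc, dif_neg hab]
        have hsub : (g : M2) 0 0 - (g : M2) 1 1 ≠ 0 := sub_ne_zero.mpr had
        refine ⟨Matrix.GeneralLinearGroup.mkOfDetNeZero
          !![1, (g : M2) 0 1 / ((g : M2) 0 0 - (g : M2) 1 1); 0, 1]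
          (by rw [Matrix.det_fin_two_of]; simp), ?_, ?_⟩
        · rw [mem_iff, coe_mk]; simp
        · rw [hi]
          apply conj_eq_of
          rw [coe_mk]
          show _ = ((canon (Sum.inl (Sum.inl (⟨(g : M2) 0 0, (diag_ne_zero g hc).1⟩,
            ⟨(g : M2) 1 1, (diag_ne_zero g hc).2⟩))) : GL (Fin 2) F) : M2) * _
          rw [canon, coe_mk]
          ext i j
          fin_cases i <;> fin_cases j <;>
            simp [Matrix.mul_apply, Fin.sum_univ_two, hc] <;>
            field_simp <;> ring
  · -- lower left entry nonzero : conjugate to the companion matrix by !![c,d;0,1]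
    have hi : inv2 g = Sum.inr ((g : M2) 0 0 + (g : M2) 1 1,
        ⟨(g : M2) 0 0 * (g : M2) 1 1 - (g : M2) 0 1 * (g : M2) 1 0, det_entries g⟩) := by
      rw [inv2, dif_neg hc]
    refine ⟨Matrix.GeneralLinearGroup.mkOfDetNeZero !![(g : M2) 1 0, (g : M2) 1 1; 0, 1]
      (by rw [Matrix.det_fin_two_of]; simpa using hc), ?_, ?_⟩
    · rw [mem_iff, coe_mk]; simp
    · rw [hi]
      apply conj_eq_of
      rw [coe_mk]
      show _ = ((canon (Sum.inr ((g : M2) 0 0 + (g : M2) 1 1,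
        ⟨(g : M2) 0 0 * (g : M2) 1 1 - (g : M2) 0 1 * (g : M2) 1 0, det_entries g⟩)) :
          GL (Fin 2) F) : M2) * _
      rw [canon, coe_mk]
      ext i j
      fin_cases i <;> fin_cases j <;>
        simp [Matrix.mul_apply, Fin.sum_univ_two] <;> ring

/-- The classifying bijection. -/
noncomputable def Psi (F : Type) [Field F] (c : C F) :
    {O : Set (GL (Fin 2) F) // ∃ x : GL (Fin 2) F,
      O = {y : GL (Fin 2) F | ∃ p ∈ Sset F, y = p * x * p⁻¹}} :=
  ⟨{y : GL (Fin 2) F | ∃ p ∈ Sset F, y = p * canon c * p⁻¹}, canon c, rfl⟩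

lemma psi_bijective : Function.Bijective (Psi F) := by
  constructor
  · intro c₁ c₂ h
    have h' : {y : GL (Fin 2) F | ∃ p ∈ Sset F, y = p * canon c₁ * p⁻¹} =
        {y : GL (Fin 2) F | ∃ p ∈ Sset F, y = p * canon c₂ * p⁻¹} :=
      congrArg Subtype.val h
    have hmem : canon c₁ ∈ {y : GL (Fin 2) F | ∃ p ∈ Sset F, y = p * canon c₂ * p⁻¹} := by
      rw [← h']
      exact ⟨1, one_mem', by group⟩
    obtain ⟨p, hp, hcp⟩ := hmem
    have h2 := inv2_conj p (canon c₂) ((mem_iff p).mp hp)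
    rw [← hcp] at h2
    rw [← inv2_canon (F := F) c₁, ← inv2_canon (F := F) c₂, h2]
  · rintro ⟨O, x, rfl⟩
    refine ⟨inv2 x, Subtype.ext ?_⟩
    show {y : GL (Fin 2) F | ∃ p ∈ Sset F, y = p * canon (inv2 x) * p⁻¹} = _
    obtain ⟨p, hp, hpx⟩ := exists_conj x
    rw [← hpx]
    exact orb_conj hp x

end Stmt11Aux

/-- The number of orbits of the Borel subgroup `B` of invertible upper triangular matrices
acting on `GL_2(q)` by conjugation is `2q(q - 1)`. -/
theorem stmt11 (q : ℕ) (hq : IsPrimePow q) (F : Type) [Field F] [Fintype F]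
    (hF : Fintype.card F = q) :
    numConjOrbits {g : GL (Fin 2) F |
        ∀ i j : Fin 2, j < i → (g : Matrix (Fin 2) (Fin 2) F) i j = 0} =
      2 * q * (q - 1) := by
  classical
  have hcard : numConjOrbits (Stmt11Aux.Sset F) = Nat.card (Stmt11Aux.C F) := by
    rw [numConjOrbits]
    exact (Nat.card_congr (Equiv.ofBijective _ (Stmt11Aux.psi_bijective (F := F)))).symm
  have hS : Nat.card (Stmt11Aux.S F) = q - 1 := by
    rw [← Nat.card_congr (unitsEquivNeZero (G₀ := F)), Nat.card_units,
      Nat.card_eq_fintype_card, hF]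
  have hF' : Nat.card F = q := by rw [Nat.card_eq_fintype_card, hF]
  have : numConjOrbits (Stmt11Aux.Sset F) = 2 * q * (q - 1) := by
    rw [hcard]
    rw [show Stmt11Aux.C F = (((Stmt11Aux.S F × Stmt11Aux.S F) ⊕ Stmt11Aux.S F) ⊕
      (F × Stmt11Aux.S F)) from rfl]
    rw [Nat.card_sum, Nat.card_sum, Nat.card_prod, Nat.card_prod, hS, hF']
    obtain ⟨k, rfl⟩ : ∃ k, q = k + 1 := ⟨q - 1, by have := hq.one_lt; omega⟩
    simp only [Nat.add_sub_cancel]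
    ring
  exact this
end

section
/- Let F be a field, let V and W be finite-dimensional F-vector spaces, and let x be an invertible linear endomorphism of V ⊕ W with x(V) = V and x(W) = W. Suppose the characteristic polynomial of the restriction of x to V and the characteristic polynomial of the restriction of x to W are coprime in F[X]. Then every x-invariant subspace U of V ⊕ W decomposes as U = (U ∩ V) ⊕ (U ∩ W). -/
lemma stmt16_pow_mem {F M : Type*} [Field F] [AddCommGroup M] [Module F M]
    (x : M →ₗ[F] M) (S : Submodule F M) (h : ∀ v ∈ S, x v ∈ S)
    (n : ℕ) {v : M} (hv : v ∈ S) : (x ^ n) v ∈ S := by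
  induction n with
  | zero => simpa using hv
  | succ n ih => rw [pow_succ', Module.End.mul_apply]; exact h _ ih

lemma stmt16_aeval_mem {F M : Type*} [Field F] [AddCommGroup M] [Module F M]
    (x : M →ₗ[F] M) (S : Submodule F M) (h : ∀ v ∈ S, x v ∈ S)
    (p : Polynomial F) {v : M} (hv : v ∈ S) : Polynomial.aeval x p v ∈ S := by
  induction p using Polynomial.induction_on' with
  | add p q hp hq => rw [map_add, LinearMap.add_apply]; exact S.add_mem hp hq
  | monomial n c =>
      rw [Polynomial.aeval_monomial, Module.End.mul_apply, Module.algebraMap_end_apply]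
      exact S.smul_mem _ (stmt16_pow_mem x S h n hv)

lemma stmt16_pow_restrict {F M : Type*} [Field F] [AddCommGroup M] [Module F M]
    (x : M →ₗ[F] M) {S : Submodule F M} (h : ∀ v ∈ S, x v ∈ S)
    (n : ℕ) (v : S) : (x ^ n) (v : M) = (((x.restrict h) ^ n) v : M) := by
  induction n with
  | zero => simp
  | succ n ih =>
      rw [pow_succ', pow_succ', Module.End.mul_apply, Module.End.mul_apply, ih,
        LinearMap.restrict_apply]

lemma stmt16_aeval_restrict {F M : Type*} [Field F] [AddCommGroup M] [Module F M]
    (x : M →ₗ[F] M) {S : Submodule F M} (h : ∀ v ∈ S, x v ∈ S)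
    (p : Polynomial F) (v : S) :
    Polynomial.aeval x p (v : M) = ((Polynomial.aeval (x.restrict h) p) v : M) := by
  induction p using Polynomial.induction_on' with
  | add p q hp hq => rw [map_add, map_add, LinearMap.add_apply, LinearMap.add_apply,
      Submodule.coe_add, hp, hq]
  | monomial n c =>
      rw [Polynomial.aeval_monomial, Polynomial.aeval_monomial, Module.End.mul_apply,
        Module.End.mul_apply, Module.algebraMap_end_apply, Module.algebraMap_end_apply,
        Submodule.coe_smul, stmt16_pow_restrict x h n v]

lemma stmt16_charpoly_kill {F M : Type*} [Field F] [AddCommGroup M] [Module F M]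
    (x : M →ₗ[F] M) {S : Submodule F M} [FiniteDimensional F S]
    (h : ∀ v ∈ S, x v ∈ S) {v : M} (hv : v ∈ S) :
    Polynomial.aeval x (LinearMap.charpoly (x.restrict h)) v = 0 := by
  have := stmt16_aeval_restrict x h (LinearMap.charpoly (x.restrict h)) ⟨v, hv⟩
  rw [this, LinearMap.aeval_self_charpoly]
  simp

/-- Let `x` be an invertible linear endomorphism of `V ⊕ W` with `x(V) = V` and `x(W) = W`.
If the characteristic polynomials of the restrictions of `x` to `V` and to `W` are coprime,
then every `x`-invariant subspace `U` of `V ⊕ W` decomposes as `U = (U ∩ V) ⊕ (U ∩ W)`. -/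
theorem stmt16 (F : Type*) [Field F] (V W : Type*)
    [AddCommGroup V] [Module F V] [AddCommGroup W] [Module F W]
    [FiniteDimensional F V] [FiniteDimensional F W]
    (x : (V × W) →ₗ[F] (V × W)) (hx : Function.Bijective x)
    (hVmem : ∀ v ∈ LinearMap.range (LinearMap.inl F V W),
      x v ∈ LinearMap.range (LinearMap.inl F V W))
    (hWmem : ∀ w ∈ LinearMap.range (LinearMap.inr F V W),
      x w ∈ LinearMap.range (LinearMap.inr F V W))
    (hVeq : Submodule.map x (LinearMap.range (LinearMap.inl F V W)) =
      LinearMap.range (LinearMap.inl F V W))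
    (hWeq : Submodule.map x (LinearMap.range (LinearMap.inr F V W)) =
      LinearMap.range (LinearMap.inr F V W))
    (hcop : IsCoprime (LinearMap.charpoly (x.restrict hVmem))
      (LinearMap.charpoly (x.restrict hWmem)))
    (U : Submodule F (V × W)) (hU : Submodule.map x U ≤ U) :
    U = (U ⊓ LinearMap.range (LinearMap.inl F V W)) ⊔
      (U ⊓ LinearMap.range (LinearMap.inr F V W)) := by
  set S := LinearMap.range (LinearMap.inl F V W) with hS
  set T := LinearMap.range (LinearMap.inr F V W) with hT
  set pV := LinearMap.charpoly (x.restrict hVmem) with hpV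
  set pW := LinearMap.charpoly (x.restrict hWmem) with hpW
  obtain ⟨a, b, hab⟩ := hcop
  have hU' : ∀ v ∈ U, x v ∈ U := fun v hv => hU ⟨v, hv, rfl⟩
  apply le_antisymm
  · intro u hu
    have huV : ((u.1, 0) : V × W) ∈ S := ⟨u.1, rfl⟩
    have huW : (((0 : V), u.2) : V × W) ∈ T := ⟨u.2, rfl⟩
    have hsplit : u = ((u.1, 0) : V × W) + ((0 : V), u.2) := by
      ext <;> simp
    -- aeval x pV u ∈ T
    have hVkill : Polynomial.aeval x pV u ∈ T := by
      rw [hsplit, map_add]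
      refine T.add_mem ?_ (stmt16_aeval_mem x T hWmem pV huW)
      rw [stmt16_charpoly_kill x hVmem huV]
      exact T.zero_mem
    have hWkill : Polynomial.aeval x pW u ∈ S := by
      rw [hsplit, map_add]
      refine S.add_mem (stmt16_aeval_mem x S hVmem pW huV) ?_
      rw [stmt16_charpoly_kill x hWmem huW]
      exact S.zero_mem
    have h1 : Polynomial.aeval x (a * pV) u ∈ U ⊓ T := by
      constructor
      · exact stmt16_aeval_mem x U hU' _ hu
      · rw [map_mul, Module.End.mul_apply]
        exact stmt16_aeval_mem x T hWmem a hVkill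
    have h2 : Polynomial.aeval x (b * pW) u ∈ U ⊓ S := by
      constructor
      · exact stmt16_aeval_mem x U hU' _ hu
      · rw [map_mul, Module.End.mul_apply]
        exact stmt16_aeval_mem x S hVmem b hWkill
    have hsum : Polynomial.aeval x (b * pW) u + Polynomial.aeval x (a * pV) u = u := by
      rw [← LinearMap.add_apply, ← map_add, add_comm (b * pW), hab]
      simp
    exact hsum ▸ Submodule.add_mem_sup h2 h1
  · exact sup_le inf_le_left inf_le_left
end
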